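/- Let v_1, ..., v_r be vectors in ℝ^d and h_1, ..., h_r be positive reals, and suppose A = ∑_{i=1}^r v_i v_i' / h_i is positive definite (hence invertible). Then ∑_{i=1}^r h_i − (∑_{i=1}^r v_i)' A^{-1} (∑_{i=1}^r v_i) ≥ 0. -/

import Mathlib

open Matrix

/-- If `A = ∑ vᵢvᵢ'/hᵢ` is positive definite, then
`∑ hᵢ − (∑ vᵢ)' A⁻¹ (∑ vᵢ) ≥ 0`. -/
theorem sum_h_sub_quadform_nonneg {d r : ℕ} (v : Fin r → Fin d → ℝ) (h : Fin r → ℝ)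
    (hh : ∀ i, 0 < h i)
    (hA : (∑ i, (h i)⁻¹ • vecMulVec (v i) (v i)).PosDef) :
    0 ≤ ∑ i, h i -
      (∑ i, v i) ⬝ᵥ ((∑ i, (h i)⁻¹ • vecMulVec (v i) (v i))⁻¹ *ᵥ ∑ i, v i) := by
  set A : Matrix (Fin d) (Fin d) ℝ := ∑ i, (h i)⁻¹ • vecMulVec (v i) (v i) with hAdef
  set w : Fin d → ℝ := ∑ i, v i with hw
  set u : Fin d → ℝ := A⁻¹ *ᵥ w with hu
  have hdet : IsUnit A.det := isUnit_iff_ne_zero.2 hA.det_pos.ne'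
  have hAu : A *ᵥ u = w := by
    rw [hu, mulVec_mulVec, Matrix.mul_nonsing_inv A hdet, one_mulVec]
  set Q : ℝ := w ⬝ᵥ u with hQ
  -- Q ≥ 0 since A⁻¹ is posdef
  have hQ0 : 0 ≤ Q := by
    rcases eq_or_ne w 0 with hw0 | hw0
    · simp [hQ, hw0]
    · have := hA.inv.dotProduct_mulVec_pos hw0
      simpa [hQ, hu] using this.le
  have key : ∀ x : Fin d → ℝ, (vecMulVec x x *ᵥ u) ⬝ᵥ u = (x ⬝ᵥ u) ^ 2 := by
    intro x
    simp only [vecMulVec, of_apply, mulVec, dotProduct, sq]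
    calc ∑ j, (∑ k, x j * x k * u k) * u j
        = ∑ j, ∑ k, (x j * u j) * (x k * u k) := by
          refine Finset.sum_congr rfl fun j _ => ?_
          rw [Finset.sum_mul]
          exact Finset.sum_congr rfl fun k _ => by ring
      _ = (∑ j, x j * u j) * ∑ k, x k * u k := (Finset.sum_mul_sum _ _ _ _).symm
  have dsum : ∀ (f : Fin r → Fin d → ℝ), (∑ i, f i) ⬝ᵥ u = ∑ i, f i ⬝ᵥ u := by
    intro f
    simp only [dotProduct, Finset.sum_apply, Finset.sum_mul]
    exact Finset.sum_comm
  -- Q as a sum of squares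
  have hQsum : Q = ∑ i, (h i)⁻¹ * (v i ⬝ᵥ u) ^ 2 := by
    have h1 : Q = (A *ᵥ u) ⬝ᵥ u := by rw [hAu, hQ]
    have hm : A *ᵥ u = ∑ i, ((h i)⁻¹ • vecMulVec (v i) (v i)) *ᵥ u := by
      rw [hAdef]; exact map_sum (Matrix.mulVec.addMonoidHomLeft u) _ Finset.univ
    rw [h1, hm, dsum]
    refine Finset.sum_congr rfl fun i _ => ?_
    rw [smul_mulVec, smul_dotProduct, key (v i), smul_eq_mul]
  -- Cauchy–Schwarz : Q² ≤ (∑ h) * Q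
  have hcs : Q ^ 2 ≤ (∑ i, h i) * Q := by
    have h2 : Q = ∑ i, v i ⬝ᵥ u := by
      rw [hQ, hw, dsum]
    calc Q ^ 2 = (∑ i, v i ⬝ᵥ u) ^ 2 := by rw [h2]
      _ ≤ (∑ i, h i) * ∑ i, (h i)⁻¹ * (v i ⬝ᵥ u) ^ 2 :=
          Finset.sum_sq_le_sum_mul_sum_of_sq_eq_mul _
            (fun i _ => (hh i).le)
            (fun i _ => mul_nonneg (inv_nonneg.2 (hh i).le) (sq_nonneg _))
            (fun i _ => by rw [← mul_assoc, mul_inv_cancel₀ (hh i).ne', one_mul])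
      _ = (∑ i, h i) * Q := by rw [hQsum]
  rcases hQ0.eq_or_lt with h0 | h0
  · rw [← h0]
    simpa using Finset.sum_nonneg fun i _ => (hh i).le
  · have : Q ≤ ∑ i, h i := by
      have := hcs
      rw [sq] at this
      exact le_of_mul_le_mul_right this h0
    linarith
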